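/- A word over the alphabet {a, a'} is a Dyck word (reducible to the empty word by cancellations a a' → ε) if and only if it is congruent, under the neutralization relation a N^m a' ≈ N^(m+2) (for any m ≥ 0), to the word N^|x|, where N is a fresh neutral symbol. -/

import Mathlib

/-- The Dyck alphabet Γ = {a, a'}: `op` is `a`, `cl` is `a'`. -/
inductive Gam : Type
  | op | cl
deriving DecidableEq

/-- The extended alphabet Γ ∪ {N}. -/
inductive GamN : Type
  | op | cl | N
deriving DecidableEq

def embed : Gam → GamN
  | Gam.op => GamN.op
  | Gam.cl => GamN.cl

/-- One cancellation step `a a' → ε`. -/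
def cancelStep (w w' : List Gam) : Prop :=
  ∃ u v, w = u ++ [Gam.op, Gam.cl] ++ v ∧ w' = u ++ v

/-- A word is Dyck if it reduces to the empty word by cancellations. -/
def IsDyck (w : List Gam) : Prop := Relation.ReflTransGen cancelStep w []

/-- One neutralization rewriting step `a N^m a' → N^(m+2)` (in any context);
the congruence ≈ is the equivalence generated by it. -/
def neutStep (w w' : List GamN) : Prop :=
  ∃ (u v : List GamN) (m : ℕ),
    w = u ++ [GamN.op] ++ List.replicate m GamN.N ++ [GamN.cl] ++ v ∧
    w' = u ++ List.replicate (m + 2) GamN.N ++ v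

/-- Balance checker with counter. -/
def chk : List Gam → ℕ → Bool
  | [], n => n == 0
  | Gam.op :: w, n => chk w (n+1)
  | Gam.cl :: _, 0 => false
  | Gam.cl :: w, n+1 => chk w n

lemma chk_insert (u v : List Gam) (n : ℕ) :
    chk (u ++ [Gam.op, Gam.cl] ++ v) n = chk (u ++ v) n := by
  induction u generalizing n with
  | nil => simp [chk]
  | cons a u ih =>
    cases a with
    | op => exact ih (n+1)
    | cl =>
      cases n with
      | zero => rfl
      | succ n => exact ih n

lemma bal_of_dyck : ∀ {w}, IsDyck w → chk w 0 = true := by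
  intro w h
  induction h using Relation.ReflTransGen.head_induction_on with
  | refl => rfl
  | head step _ ih =>
    obtain ⟨u, v, rfl, rfl⟩ := step
    rw [chk_insert]
    exact ih

lemma exists_pair_aux : ∀ (t : List Gam) (n : ℕ), chk t (n+1) = true →
    (∃ v, t = Gam.cl :: v) ∨ (∃ u v, t = u ++ [Gam.op, Gam.cl] ++ v) := by
  intro t
  induction t with
  | nil => intro n h; simp [chk] at h
  | cons a t ih =>
    intro n h
    cases a with
    | cl => exact Or.inl ⟨t, rfl⟩
    | op =>
      rcases ih (n+1) h with ⟨v, rfl⟩ | ⟨u, v, rfl⟩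
      · exact Or.inr ⟨[], v, rfl⟩
      · exact Or.inr ⟨Gam.op :: u, v, rfl⟩

lemma exists_pair (w : List Gam) (hw : w ≠ []) (h : chk w 0 = true) :
    ∃ u v, w = u ++ [Gam.op, Gam.cl] ++ v := by
  cases w with
  | nil => exact absurd rfl hw
  | cons a t =>
    cases a with
    | cl => simp [chk] at h
    | op =>
      rcases exists_pair_aux t 0 h with ⟨v, rfl⟩ | ⟨u, v, rfl⟩
      · exact ⟨[], v, rfl⟩
      · exact ⟨Gam.op :: u, v, rfl⟩

lemma dyck_of_bal (n : ℕ) : ∀ w : List Gam, w.length = n → chk w 0 = true → IsDyck w := by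
  induction n using Nat.strong_induction_on with
  | _ n ih =>
    intro w hl hb
    by_cases hw : w = []
    · subst hw; exact Relation.ReflTransGen.refl
    · obtain ⟨u, v, rfl⟩ := exists_pair w hw hb
      have hb' : chk (u ++ v) 0 = true := by rw [← chk_insert]; exact hb
      have hd : IsDyck (u ++ v) :=
        ih (u ++ v).length (by subst hl; simp) _ rfl hb'
      exact Relation.ReflTransGen.head ⟨u, v, rfl, rfl⟩ hd

def proj : List GamN → List Gam
  | [] => []
  | GamN.op :: w => Gam.op :: proj w
  | GamN.cl :: w => Gam.cl :: proj w
  | GamN.N :: w => proj w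

lemma proj_append : ∀ (u v : List GamN), proj (u ++ v) = proj u ++ proj v := by
  intro u v
  induction u with
  | nil => rfl
  | cons a u ih => cases a <;> simp [proj, ih]

lemma proj_replicate (m : ℕ) : proj (List.replicate m GamN.N) = [] := by
  induction m with
  | zero => rfl
  | succ m ih => simpa [List.replicate_succ, proj] using ih

lemma proj_map_embed (x : List Gam) : proj (x.map embed) = x := by
  induction x with
  | nil => rfl
  | cons a x ih => cases a <;> simp [embed, proj, ih]

lemma eq_replicate_of_proj_nil : ∀ w : List GamN, proj w = [] →
    w = List.replicate w.length GamN.N := by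
  intro w
  induction w with
  | nil => intro _; rfl
  | cons a w ih =>
    intro h
    cases a with
    | op => simp [proj] at h
    | cl => simp [proj] at h
    | N =>
      have := ih (by simpa [proj] using h)
      simp only [List.length_cons, List.replicate_succ]
      exact congrArg _ this

lemma lift_cl : ∀ (w : List GamN) (v' : List Gam), proj w = Gam.cl :: v' →
    ∃ m v, w = List.replicate m GamN.N ++ GamN.cl :: v ∧ proj v = v' := by
  intro w
  induction w with
  | nil => intro v' h; simp [proj] at h
  | cons a w ih =>
    intro v' h
    cases a with
    | op => simp [proj] at h
    | cl =>
      rw [proj] at h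
      exact ⟨0, w, by simp, (List.cons.injEq _ _ _ _ ▸ h).2⟩
    | N =>
      obtain ⟨m, v, rfl, hv⟩ := ih v' (by simpa [proj] using h)
      exact ⟨m + 1, v, by simp [List.replicate_succ], hv⟩

lemma lift_pair : ∀ (w : List GamN) (u' v' : List Gam),
    proj w = u' ++ [Gam.op, Gam.cl] ++ v' →
    ∃ u m v, w = u ++ [GamN.op] ++ List.replicate m GamN.N ++ [GamN.cl] ++ v ∧
      proj u = u' ∧ proj v = v' := by
  intro w
  induction w with
  | nil => intro u' v' h; simp [proj] at h
  | cons a w ih =>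
    intro u' v' h
    cases a with
    | N =>
      obtain ⟨u, m, v, rfl, hu, hv⟩ := ih u' v' (by simpa [proj] using h)
      exact ⟨GamN.N :: u, m, v, rfl, by simp [proj, hu], hv⟩
    | op =>
      rw [proj] at h
      cases u' with
      | nil =>
        simp only [List.nil_append, List.cons_append] at h
        have h' : proj w = Gam.cl :: v' := (List.cons.injEq _ _ _ _ ▸ h).2
        obtain ⟨m, v, rfl, hv⟩ := lift_cl w v' h'
        exact ⟨[], m, v, by simp, rfl, hv⟩
      | cons b u'' =>
        simp only [List.cons_append] at h
        have hb : Gam.op = b := (List.cons.injEq _ _ _ _ ▸ h).1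
        have h' : proj w = u'' ++ [Gam.op, Gam.cl] ++ v' := (List.cons.injEq _ _ _ _ ▸ h).2
        obtain ⟨u, m, v, rfl, hu, hv⟩ := ih u'' v' h'
        exact ⟨GamN.op :: u, m, v, rfl, by simp [proj, hu, ← hb], hv⟩
    | cl =>
      rw [proj] at h
      cases u' with
      | nil => simp at h
      | cons b u'' =>
        simp only [List.cons_append] at h
        have hb : Gam.cl = b := (List.cons.injEq _ _ _ _ ▸ h).1
        have h' : proj w = u'' ++ [Gam.op, Gam.cl] ++ v' := (List.cons.injEq _ _ _ _ ▸ h).2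
        obtain ⟨u, m, v, rfl, hu, hv⟩ := ih u'' v' h'
        exact ⟨GamN.cl :: u, m, v, rfl, by simp [proj, hu, ← hb], hv⟩

lemma neut_of_bal (k : ℕ) : ∀ w : List GamN, (proj w).length = k →
    chk (proj w) 0 = true →
    Relation.EqvGen neutStep w (List.replicate w.length GamN.N) := by
  induction k using Nat.strong_induction_on with
  | _ k ih =>
    intro w hl hb
    by_cases hp : proj w = []
    · have hw := eq_replicate_of_proj_nil w hp
      conv_lhs => rw [hw]
      exact Relation.EqvGen.refl _
    · obtain ⟨u', v', hpw⟩ := exists_pair (proj w) hp hb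
      obtain ⟨u, m, v, hwform, hu, hv⟩ := lift_pair w u' v' hpw
      set w₂ := u ++ List.replicate (m + 2) GamN.N ++ v with hw₂
      have hstep : neutStep w w₂ := ⟨u, v, m, hwform, rfl⟩
      have hpw' : proj w = u' ++ [Gam.op, Gam.cl] ++ v' := hpw
      have hproj2 : proj w₂ = u' ++ v' := by
        simp [hw₂, proj_append, proj_replicate, hu, hv]
      have hb2 : chk (proj w₂) 0 = true := by
        rw [hproj2, ← chk_insert, ← hpw']
        exact hb
      have hlen2 : (proj w₂).length < k := by
        rw [hproj2]
        rw [hpw'] at hl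
        simp at hl ⊢
        omega
      have hih := ih (proj w₂).length hlen2 w₂ rfl hb2
      have hlw : w₂.length = w.length := by
        rw [hwform]
        simp [hw₂]
        omega
      rw [hlw] at hih
      exact Relation.EqvGen.trans _ _ _ (Relation.EqvGen.rel _ _ hstep) hih

lemma bal_iff_eqv : ∀ {w w' : List GamN}, Relation.EqvGen neutStep w w' →
    chk (proj w) 0 = chk (proj w') 0 := by
  intro w w' h
  induction h with
  | rel a b hab =>
    obtain ⟨u, v, m, rfl, rfl⟩ := hab
    have h1 : proj (u ++ [GamN.op] ++ List.replicate m GamN.N ++ [GamN.cl] ++ v)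
        = proj u ++ [Gam.op, Gam.cl] ++ proj v := by
      simp [proj_append, proj_replicate, proj]
    have h2 : proj (u ++ List.replicate (m + 2) GamN.N ++ v) = proj u ++ proj v := by
      simp [proj_append, proj_replicate]
    rw [h1, h2, chk_insert]
  | refl _ => rfl
  | symm _ _ _ ih => exact ih.symm
  | trans _ _ _ _ _ ih1 ih2 => exact ih1.trans ih2

/-- A word over Γ is Dyck iff it is ≈-congruent to `N^{|x|}`. -/
theorem dyck_iff_neutralizable (x : List Gam) :
    IsDyck x ↔
      Relation.EqvGen neutStep (x.map embed) (List.replicate x.length GamN.N) := by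
  constructor
  · intro h
    have hb : chk x 0 = true := bal_of_dyck h
    have hbm : chk (proj (x.map embed)) 0 = true := by rw [proj_map_embed]; exact hb
    have := neut_of_bal (proj (x.map embed)).length (x.map embed) rfl hbm
    rwa [List.length_map] at this
  · intro h
    have hc := bal_iff_eqv h
    rw [proj_map_embed, proj_replicate] at hc
    exact dyck_of_bal x.length x rfl (by rw [hc]; rfl)
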